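/- For all integers n, t with 0 < t < n, the maximum size M(n,t) of a t-grain-error-correcting code of length n satisfies M(n,t) ≤ 2 · Σ_{k=0}^{n-1} binomial(n-1, k) / (Σ_{j=0}^{min(t,k)} binomial(k, j)). -/

import Mathlib

/-- `e` is a `t`-grain-error for `x`: weight at most `t`, `e₁ = 0`, and an error at
position `i` (2 ≤ i ≤ n) requires `x_i ≠ x_{i-1}`. (0-indexed here.) -/
def grainError {n : ℕ} (t : ℕ) (x e : Fin n → ZMod 2) : Prop :=
  (Finset.univ.filter fun i => e i ≠ 0).card ≤ t ∧
  (∀ i : Fin n, (i : ℕ) = 0 → e i = 0) ∧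
  (∀ i : Fin n, 0 < (i : ℕ) → e i ≠ 0 →
    x i ≠ x ⟨(i : ℕ) - 1, lt_of_le_of_lt (Nat.sub_le _ _) i.isLt⟩)

/-- The grain error-ball `B_{t,G}(x)`. -/
def grainBall {n : ℕ} (t : ℕ) (x : Fin n → ZMod 2) : Set (Fin n → ZMod 2) :=
  {y | ∃ e, grainError t x e ∧ y = x + e}

/-- The number of runs of a binary vector. -/
def runs {n : ℕ} (x : Fin n → ZMod 2) : ℕ :=
  (if n = 0 then 0 else 1) +
  (Finset.univ.filter fun i : Fin n =>
    0 < (i : ℕ) ∧ x i ≠ x ⟨(i : ℕ) - 1, lt_of_le_of_lt (Nat.sub_le _ _) i.isLt⟩).card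

def grainCorrecting {n : ℕ} (t : ℕ) (C : Finset (Fin n → ZMod 2)) : Prop :=
  ∀ x ∈ C, ∀ y ∈ C, x ≠ y → Disjoint (grainBall t x) (grainBall t y)


open Finset

variable {n : ℕ}


def transSet (x : Fin n → ZMod 2) : Finset (Fin n) :=
  Finset.univ.filter fun i : Fin n =>
    0 < (i : ℕ) ∧ x i ≠ x ⟨(i : ℕ) - 1, lt_of_le_of_lt (Nat.sub_le _ _) i.isLt⟩

lemma mem_transSet {x : Fin n → ZMod 2} {i : Fin n} :
    i ∈ transSet x ↔ 0 < (i : ℕ) ∧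
      x i ≠ x ⟨(i : ℕ) - 1, lt_of_le_of_lt (Nat.sub_le _ _) i.isLt⟩ := by
  simp [transSet]

/-- The set of candidate "run starts" for position `i` w.r.t. error vector `e`. -/
def runA (e : Fin n → ZMod 2) (i : Fin n) : Set ℕ :=
  {j | j ≤ (i : ℕ) ∧ ∀ l (hl : l < n), j ≤ l → l < (i : ℕ) → e ⟨l, hl⟩ ≠ 0}

lemma runA_self (e : Fin n → ZMod 2) (i : Fin n) : (i : ℕ) ∈ runA e i :=
  ⟨le_refl _, fun l _ h1 h2 => absurd (lt_of_le_of_lt h1 h2) (lt_irrefl _)⟩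

lemma zmod2_ne {a b : ZMod 2} (h : a ≠ b) : a + 1 = b := by
  revert h; revert a b; decide

lemma zmod2_one {a : ZMod 2} (h : a ≠ 0) : a = 1 := by
  revert h; revert a; decide

lemma mono_trans (x e : Fin n → ZMod 2)
    (hzero : ∀ i : Fin n, (i : ℕ) = 0 → e i = 0)
    (hsupp : ∀ i : Fin n, 0 < (i : ℕ) → e i ≠ 0 →
      x i ≠ x ⟨(i : ℕ) - 1, lt_of_le_of_lt (Nat.sub_le _ _) i.isLt⟩) :
    (transSet (x + e)).card ≤ (transSet x).card := by
  classical
  set y := x + e with hy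
  set s : Fin n → ℕ := fun i => sInf (runA e i) with hs
  have hsle : ∀ i : Fin n, s i ≤ (i : ℕ) := fun i => Nat.sInf_le (runA_self e i)
  have hsmem : ∀ i : Fin n, s i ∈ runA e i := fun i => Nat.sInf_mem ⟨_, runA_self e i⟩
  set f : Fin n → Fin n := fun i =>
    if e i ≠ 0 then i else ⟨s i, lt_of_le_of_lt (hsle i) i.isLt⟩ with hf
  have hsne : ∀ i : Fin n, s i < (i : ℕ) →
      e ⟨s i, lt_of_le_of_lt (hsle i) i.isLt⟩ ≠ 0 := by
    intro i hlt
    exact (hsmem i).2 (s i) _ (le_refl _) hlt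
  have hprev0 : ∀ i : Fin n, 0 < (i : ℕ) → s i = (i : ℕ) →
      e ⟨(i : ℕ) - 1, lt_of_le_of_lt (Nat.sub_le _ _) i.isLt⟩ = 0 := by
    intro i hi hsi
    by_contra hne
    have hmem : (i : ℕ) - 1 ∈ runA e i := by
      refine ⟨Nat.sub_le _ _, fun l hl h1 h2 => ?_⟩
      have : l = (i : ℕ) - 1 := le_antisymm (Nat.le_sub_one_of_lt h2) h1
      subst this
      exact hne
    have h2 : s i ≤ (i : ℕ) - 1 := Nat.sInf_le hmem
    omega
  have hspos : ∀ i : Fin n, s i < (i : ℕ) → 0 < s i := by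
    intro i hlt
    rcases Nat.eq_zero_or_pos (s i) with h0 | h
    · exfalso
      apply hsne i hlt
      apply hzero
      simp [h0]
    · exact h
  have hmaps : ∀ i ∈ transSet y, f i ∈ transSet x := by
    intro i hi
    rw [mem_transSet] at hi
    obtain ⟨hipos, hidiff⟩ := hi
    by_cases he : e i ≠ 0
    · have hfi : f i = i := by simp [hf, he]
      rw [hfi, mem_transSet]
      exact ⟨hipos, hsupp i hipos he⟩
    · push_neg at he
      have hfi : f i = ⟨s i, lt_of_le_of_lt (hsle i) i.isLt⟩ := by simp [hf, he]
      rcases lt_or_eq_of_le (hsle i) with hlt | heq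
      · rw [hfi, mem_transSet]
        exact ⟨hspos i hlt, hsupp _ (hspos i hlt) (hsne i hlt)⟩
      · have hep : e ⟨(i : ℕ) - 1, lt_of_le_of_lt (Nat.sub_le _ _) i.isLt⟩ = 0 :=
          hprev0 i hipos heq
        have hxi : x i ≠ x ⟨(i : ℕ) - 1, lt_of_le_of_lt (Nat.sub_le _ _) i.isLt⟩ := by
          intro hcon
          apply hidiff
          show x i + e i = x _ + e _
          rw [he, hep, hcon]
        have hfi' : f i = i := by rw [hfi]; exact Fin.ext heq
        rw [hfi', mem_transSet]
        exact ⟨hipos, hxi⟩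
  -- mixed-case helper
  have hmixed : ∀ i j : Fin n, i ∈ transSet y → j ∈ transSet y →
      e i ≠ 0 → e j = 0 → (i : ℕ) = s j → i = j := by
    intro i j hi hj hei hej h1
    rcases lt_or_eq_of_le (hsle j) with hlt | heq
    · exfalso
      rw [mem_transSet] at hi hj
      have hipos : 0 < (i : ℕ) := hi.1
      have hspos' : 0 < s j := by omega
      -- minimality: s j - 1 ∉ runA e j
      have hnm : s j - 1 ∉ runA e j := by
        intro hm
        have h2 : s j ≤ s j - 1 := Nat.sInf_le hm
        omega
      have hle : s j - 1 ≤ (j : ℕ) := by omega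
      have : ¬ (∀ l (hl : l < n), s j - 1 ≤ l → l < (j : ℕ) → e ⟨l, hl⟩ ≠ 0) := by
        intro h; exact hnm ⟨hle, h⟩
      push_neg at this
      obtain ⟨l, hl, hl1, hl2, hl3⟩ := this
      -- any l in [s j, j) has e ≠ 0, so l = s j - 1
      have hleq : l = s j - 1 := by
        by_contra hne
        have hlsj : s j ≤ l := by omega
        exact (hsmem j).2 l hl hlsj hl2 hl3
      subst hleq
      -- so e at s j - 1 is 0; but i = ⟨s j⟩ is a transition of y: contradiction
      have hival : (i : ℕ) - 1 = s j - 1 := by omega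
      have heprev : e ⟨(i : ℕ) - 1, lt_of_le_of_lt (Nat.sub_le _ _) i.isLt⟩ = 0 := by
        have : (⟨(i : ℕ) - 1, lt_of_le_of_lt (Nat.sub_le _ _) i.isLt⟩ : Fin n)
            = ⟨s j - 1, hl⟩ := Fin.ext hival
        rw [this]; exact hl3
      have hxi : x i ≠ x ⟨(i : ℕ) - 1, lt_of_le_of_lt (Nat.sub_le _ _) i.isLt⟩ :=
        hsupp i hipos hei
      apply hi.2
      show x i + e i = x _ + e _
      rw [heprev, zmod2_one hei, zmod2_ne hxi, add_zero]
    · exact Fin.ext (h1.trans heq)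
  have hinj : Set.InjOn f (transSet y) := by
    intro i hi j hj hij
    rw [Finset.mem_coe] at hi hj
    by_cases hei : e i ≠ 0 <;> by_cases hej : e j ≠ 0
    · simpa [hf, hei, hej] using hij
    · push_neg at hej
      have h1 : (i : ℕ) = s j := by
        have := congrArg Fin.val hij
        simpa [hf, hei, hej] using this
      exact hmixed i j hi hj hei hej h1
    · push_neg at hei
      have h1 : (j : ℕ) = s i := by
        have := congrArg Fin.val hij
        exact (by simpa [hf, hei, hej] using this : s i = (j:ℕ)).symm
      exact (hmixed j i hj hi hej hei h1).symm
    · push_neg at hei hej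
      have h1 : s i = s j := by
        have := congrArg Fin.val hij
        simpa [hf, hei, hej] using this
      by_contra hne
      rcases Ne.lt_or_gt (fun h : (i:ℕ) = (j:ℕ) => hne (Fin.ext h)) with hlt | hlt
      · have h2 : e i ≠ 0 := by
          have := (hsmem j).2 (i : ℕ) i.isLt (h1 ▸ hsle i) hlt
          simpa using this
        exact h2 hei
      · have h2 : e j ≠ 0 := by
          have := (hsmem i).2 (j : ℕ) j.isLt (h1 ▸ hsle j) hlt
          simpa using this
        exact h2 hej
  exact Finset.card_le_card_of_injOn f hmaps hinj


def errF (E : Finset (Fin n)) : Fin n → ZMod 2 := fun i => if i ∈ E then 1 else 0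

lemma errF_ne {E : Finset (Fin n)} {i : Fin n} : errF E i ≠ 0 ↔ i ∈ E := by
  by_cases h : i ∈ E <;> simp [errF, h]

lemma errF_inj : Function.Injective (errF (n := n)) := by
  intro E E' h
  ext i
  rw [← errF_ne, ← errF_ne (E := E'), h]

def errSets (t : ℕ) (x : Fin n → ZMod 2) : Finset (Finset (Fin n)) :=
  (transSet x).powerset.filter fun E => E.card ≤ t

def ballF (t : ℕ) (x : Fin n → ZMod 2) : Finset (Fin n → ZMod 2) :=
  (errSets t x).image fun E => x + errF E

lemma grainBall_eq_ballF (t : ℕ) (x : Fin n → ZMod 2) : grainBall t x = ↑(ballF t x) := by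
  ext y
  constructor
  · rintro ⟨e, ⟨h1, h2, h3⟩, rfl⟩
    have hE : (Finset.univ.filter fun i => e i ≠ 0) ∈ errSets t x := by
      rw [errSets, mem_filter, mem_powerset]
      refine ⟨fun i hi => ?_, h1⟩
      rw [mem_filter] at hi
      rw [mem_transSet]
      have hpos : 0 < (i : ℕ) := by
        rcases Nat.eq_zero_or_pos (i : ℕ) with h0 | h
        · exact absurd (h2 i h0) hi.2
        · exact h
      exact ⟨hpos, h3 i hpos hi.2⟩
    have he : errF (Finset.univ.filter fun i => e i ≠ 0) = e := by
      funext i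
      by_cases h : e i ≠ 0
      · simp [errF, h, zmod2_one h]
      · push_neg at h
        rw [errF]; simp [h]
    rw [Finset.mem_coe, ballF, mem_image]
    exact ⟨_, hE, by rw [he]⟩
  · intro hy
    rw [Finset.mem_coe, ballF, mem_image] at hy
    obtain ⟨E, hE, rfl⟩ := hy
    rw [errSets, mem_filter, mem_powerset] at hE
    refine ⟨errF E, ⟨?_, ?_, ?_⟩, rfl⟩
    · have : (Finset.univ.filter fun i => errF E i ≠ 0) = E := by
        ext i; simp [errF_ne]
      rw [this]; exact hE.2
    · intro i hi
      rw [errF, if_neg]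
      intro hiE
      have := (mem_transSet.mp (hE.1 hiE)).1
      omega
    · intro i hpos hne
      exact (mem_transSet.mp (hE.1 (errF_ne.mp hne))).2

lemma card_errSets (t : ℕ) (x : Fin n → ZMod 2) :
    (errSets t x).card = ∑ j ∈ range (t + 1), (transSet x).card.choose j := by
  classical
  have heq : errSets t x = (range (t + 1)).biUnion fun j => (transSet x).powersetCard j := by
    ext E
    simp only [errSets, mem_filter, mem_powerset, mem_biUnion, mem_range,
      Finset.mem_powersetCard, Nat.lt_succ_iff]
    constructor
    · rintro ⟨h1, h2⟩; exact ⟨E.card, h2, h1, rfl⟩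
    · rintro ⟨j, hj, h1, rfl⟩; exact ⟨h1, hj⟩
  rw [heq, Finset.card_biUnion]
  · exact Finset.sum_congr rfl fun j _ => Finset.card_powersetCard _ _
  · intro a _ b _ hab
    simp only [Finset.disjoint_left, Finset.mem_powersetCard]
    rintro E ⟨_, h1⟩ ⟨_, h2⟩
    exact hab (h1 ▸ h2.symm ▸ rfl)

lemma card_ballF (t : ℕ) (x : Fin n → ZMod 2) :
    (ballF t x).card = ∑ j ∈ range (t + 1), (transSet x).card.choose j := by
  rw [ballF, Finset.card_image_of_injective _ (fun E E' h => errF_inj (by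
    have := congrArg (fun f => f - x) h
    simpa using this)), card_errSets]

lemma mem_ballF_trans_le {t : ℕ} {x y : Fin n → ZMod 2} (hy : y ∈ ballF t x) :
    (transSet y).card ≤ (transSet x).card := by
  rw [ballF, mem_image] at hy
  obtain ⟨E, hE, rfl⟩ := hy
  rw [errSets, mem_filter, mem_powerset] at hE
  apply mono_trans
  · intro i hi
    rw [errF, if_neg]
    intro hiE
    have := (mem_transSet.mp (hE.1 hiE)).1
    omega
  · intro i hpos hne
    exact (mem_transSet.mp (hE.1 (errF_ne.mp hne))).2

lemma zmod2_iff {a b c : ZMod 2} (h : (a ≠ c) ↔ (b ≠ c)) : a = b := by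
  revert h; revert a b c; decide

lemma transSet_subset (x : Fin n → ZMod 2) :
    transSet x ⊆ Finset.univ.filter fun i : Fin n => 0 < (i : ℕ) := by
  intro i hi
  rw [mem_filter]
  exact ⟨mem_univ _, (mem_transSet.mp hi).1⟩

lemma card_pos_filter (hn : 0 < n) :
    (Finset.univ.filter fun i : Fin n => 0 < (i : ℕ)).card = n - 1 := by
  have : (Finset.univ.filter fun i : Fin n => 0 < (i : ℕ))
      = Finset.univ.erase ⟨0, hn⟩ := by
    ext i
    simp [Fin.ext_iff, Nat.pos_iff_ne_zero]
  rw [this, Finset.card_erase_of_mem (mem_univ _), Finset.card_univ, Fintype.card_fin]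

lemma count_trans (hn : 0 < n) (k : ℕ) :
    (Finset.univ.filter fun y : Fin n → ZMod 2 => (transSet y).card = k).card
      ≤ 2 * (n - 1).choose k := by
  classical
  set P := Finset.univ.filter fun i : Fin n => 0 < (i : ℕ) with hP
  have hmaps : ∀ y ∈ (Finset.univ.filter fun y : Fin n → ZMod 2 => (transSet y).card = k),
      (y ⟨0, hn⟩, transSet y) ∈ (Finset.univ : Finset (ZMod 2)) ×ˢ P.powersetCard k := by
    intro y hy
    rw [mem_filter] at hy
    rw [Finset.mem_product, Finset.mem_powersetCard]
    exact ⟨mem_univ _, transSet_subset y, hy.2⟩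
  have hinj : Set.InjOn (fun y : Fin n → ZMod 2 => (y ⟨0, hn⟩, transSet y))
      (Finset.univ.filter fun y : Fin n → ZMod 2 => (transSet y).card = k) := by
    intro y hy z hz hyz
    simp only [Prod.mk.injEq] at hyz
    obtain ⟨h0, htr⟩ := hyz
    funext i
    suffices h : ∀ m (i : Fin n), (i : ℕ) = m → y i = z i from h (i : ℕ) i rfl
    intro m
    induction m using Nat.strong_induction_on with
    | _ m ih =>
      intro i him
      rcases Nat.eq_zero_or_pos m with h0m | hposm
      · have : i = ⟨0, hn⟩ := Fin.ext (by simp [him, h0m])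
        rw [this]; exact h0
      · have hipos : 0 < (i : ℕ) := by omega
        have hprev : y ⟨(i : ℕ) - 1, lt_of_le_of_lt (Nat.sub_le _ _) i.isLt⟩
            = z ⟨(i : ℕ) - 1, lt_of_le_of_lt (Nat.sub_le _ _) i.isLt⟩ :=
          ih ((i : ℕ) - 1) (by omega) _ rfl
        have hmem : i ∈ transSet y ↔ i ∈ transSet z := by rw [htr]
        rw [mem_transSet, mem_transSet] at hmem
        have hne : (y i ≠ y ⟨(i : ℕ) - 1, lt_of_le_of_lt (Nat.sub_le _ _) i.isLt⟩)
            ↔ (z i ≠ z ⟨(i : ℕ) - 1, lt_of_le_of_lt (Nat.sub_le _ _) i.isLt⟩) := by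
          constructor
          · intro h; exact (hmem.mp ⟨hipos, h⟩).2
          · intro h; exact (hmem.mpr ⟨hipos, h⟩).2
        rw [hprev] at hne
        exact zmod2_iff hne
  calc (Finset.univ.filter fun y : Fin n → ZMod 2 => (transSet y).card = k).card
      ≤ ((Finset.univ : Finset (ZMod 2)) ×ˢ P.powersetCard k).card :=
        Finset.card_le_card_of_injOn _ hmaps hinj
    _ = 2 * (n - 1).choose k := by
        rw [Finset.card_product, Finset.card_powersetCard, Finset.card_univ,
          ZMod.card, card_pos_filter hn]

lemma S_eq (t k : ℕ) : ∑ j ∈ range (min t k + 1), (k.choose j : ℚ)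
    = ∑ j ∈ range (t + 1), (k.choose j : ℚ) := by
  apply Finset.sum_subset (Finset.range_subset_range.mpr (by omega))
  intro j hj hnj
  rw [mem_range] at hj
  rw [mem_range, not_lt] at hnj
  have : k < j := by omega
  rw [Nat.choose_eq_zero_of_lt this, Nat.cast_zero]

lemma S_pos (t k : ℕ) : (1 : ℚ) ≤ ∑ j ∈ range (t + 1), (k.choose j : ℚ) := by
  have h0 : (0 : ℕ) ∈ range (t + 1) := mem_range.mpr (by omega)
  have := Finset.single_le_sum (f := fun j => (k.choose j : ℚ))
    (fun j _ => by positivity) h0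
  simpa using this

lemma S_mono (t : ℕ) {a b : ℕ} (h : a ≤ b) :
    ∑ j ∈ range (t + 1), (a.choose j : ℚ) ≤ ∑ j ∈ range (t + 1), (b.choose j : ℚ) := by
  apply Finset.sum_le_sum
  intro j _
  exact_mod_cast Nat.cast_le.mpr (Nat.choose_le_choose j h)

theorem stmt6 {n t : ℕ} (ht : 0 < t) (htn : t < n)
    (C : Finset (Fin n → ZMod 2)) (hC : grainCorrecting t C) :
    (C.card : ℚ) ≤ 2 * ∑ k ∈ Finset.range n,
      ((n - 1).choose k : ℚ) / ∑ j ∈ Finset.range (min t k + 1), (k.choose j : ℚ) := by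
  classical
  have hn : 0 < n := lt_trans ht htn
  set S : ℕ → ℚ := fun k => ∑ j ∈ range (t + 1), (k.choose j : ℚ) with hS
  have hSpos : ∀ k, (0 : ℚ) < S k := fun k => lt_of_lt_of_le zero_lt_one (S_pos t k)
  set K : (Fin n → ZMod 2) → ℕ := fun y => (transSet y).card with hK
  set g : (Fin n → ZMod 2) → ℚ := fun y => 1 / S (K y) with hg
  have hgnn : ∀ y, 0 ≤ g y := fun y => by
    rw [hg]; positivity
  have hKlt : ∀ y : Fin n → ZMod 2, K y < n := by
    intro y
    have h1 := Finset.card_le_card (transSet_subset y)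
    rw [card_pos_filter hn] at h1
    show (transSet y).card < n
    omega
  have hcard : ∀ x : Fin n → ZMod 2, ((ballF t x).card : ℚ) = S (K x) := by
    intro x
    rw [card_ballF, hS]
    push_cast
    rfl
  have key : ∀ x : Fin n → ZMod 2, (1 : ℚ) ≤ ∑ y ∈ ballF t x, g y := by
    intro x
    have h1 : ∀ y ∈ ballF t x, 1 / S (K x) ≤ g y := by
      intro y hy
      rw [hg]
      exact one_div_le_one_div_of_le (hSpos _) (S_mono t (mem_ballF_trans_le hy))
    calc (1 : ℚ) = ((ballF t x).card : ℚ) * (1 / S (K x)) := by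
          rw [hcard, mul_one_div, div_self (ne_of_gt (hSpos _))]
      _ = ∑ _y ∈ ballF t x, 1 / S (K x) := by rw [Finset.sum_const, nsmul_eq_mul]
      _ ≤ ∑ y ∈ ballF t x, g y := Finset.sum_le_sum h1
  have hdisj : (↑C : Set (Fin n → ZMod 2)).PairwiseDisjoint (ballF t) := by
    intro a ha b hb hab
    have h := hC a ha b hb hab
    rw [grainBall_eq_ballF, grainBall_eq_ballF] at h
    exact Finset.disjoint_coe.mp h
  calc (C.card : ℚ) = ∑ _x ∈ C, (1 : ℚ) := by
        rw [Finset.sum_const, nsmul_eq_mul, mul_one]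
    _ ≤ ∑ x ∈ C, ∑ y ∈ ballF t x, g y := Finset.sum_le_sum fun x _ => key x
    _ = ∑ y ∈ C.biUnion (ballF t), g y := (Finset.sum_biUnion hdisj).symm
    _ ≤ ∑ y ∈ Finset.univ, g y :=
        Finset.sum_le_sum_of_subset_of_nonneg (Finset.subset_univ _) fun y _ _ => hgnn y
    _ = ∑ k ∈ range n, ∑ y ∈ Finset.univ.filter fun y => K y = k, g y :=
        (Finset.sum_fiberwise_of_maps_to (fun y _ => mem_range.mpr (hKlt y)) g).symm
    _ = ∑ k ∈ range n, ((Finset.univ.filter fun y => K y = k).card : ℚ) * (1 / S k) := by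
        refine Finset.sum_congr rfl fun k _ => ?_
        rw [Finset.sum_congr rfl (fun y hy => ?_), Finset.sum_const, nsmul_eq_mul]
        rw [mem_filter] at hy
        show 1 / S (K y) = 1 / S k
        rw [hy.2]
    _ ≤ ∑ k ∈ range n, (2 * ((n - 1).choose k : ℚ)) * (1 / S k) := by
        refine Finset.sum_le_sum fun k _ => ?_
        apply mul_le_mul_of_nonneg_right _ (by positivity)
        have := count_trans hn k
        exact_mod_cast this
    _ = 2 * ∑ k ∈ range n, ((n - 1).choose k : ℚ) / S k := by
        rw [Finset.mul_sum]
        exact Finset.sum_congr rfl fun k _ => by ring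
    _ = 2 * ∑ k ∈ Finset.range n,
          ((n - 1).choose k : ℚ) / ∑ j ∈ Finset.range (min t k + 1), (k.choose j : ℚ) := by
        congr 1
        exact Finset.sum_congr rfl fun k _ => by rw [S_eq]
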